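/- Let (X,d,μ) be a proper α-Ahlfors regular metric measure space. Let K_0 ⊇ K_1 ⊇ K_2 ⊇ ⋯ be a nested decreasing sequence of subsets of X, where K_0 is a nonempty compact set and for each l ≥ 1, K_l = ⊔_{i=1}^{t_l} C_i^l is a finite disjoint union of nonempty compact sets C_1^l, …, C_{t_l}^l. Suppose: (1) for each l ≥ 1, every compact piece of K_{l−1} contains at least m_l ≥ 2 of the compact pieces of K_l; (2) the maximal diameter of the compact pieces of K_l tends to 0 as l → ∞; (3) for each l ≥ 1 there is δ_l > 0 with 0 < δ_{l+1} < δ_l such that d(C_i^l, C_j^l) ≥ δ_l for all 1 ≤ i ≠ j ≤ t_l. Then dim ⋂_{l=0}^∞ K_l ≥ α · liminf_{l→∞} log(m_1·m_2⋯m_{l−1}) / (−log(m_l·δ_l^α)). -/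

import Mathlib

open Metric Filter Set MeasureTheory
open scoped ENNReal Topology

noncomputable section

variable {X : Type*}

/-- `μ` is `α`-Ahlfors regular with constant `C`:
for every `0 < r ≤ diam X`, `r^α/C ≤ μ(B(ξ,r)) ≤ C·r^α`. -/
def IsAhlforsRegularWith [MetricSpace X] [MeasurableSpace X] (μ : Measure X)
    (α C : ℝ) : Prop :=
  ∀ (ξ : X) (r : ℝ), 0 < r → ENNReal.ofReal r ≤ EMetric.diam (univ : Set X) →
    ENNReal.ofReal (r ^ α / C) ≤ μ (ball ξ r) ∧
      μ (ball ξ r) ≤ ENNReal.ofReal (C * r ^ α)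

namespace CDLB


lemma min_le_interp {a b θ : ℝ} (ha : 0 ≤ a) (hb : 0 ≤ b) (h0 : 0 ≤ θ) (h1 : θ ≤ 1) :
    min a b ≤ a ^ (1 - θ) * b ^ θ := by
  rcases eq_or_lt_of_le (le_min ha hb) with h | h
  · rw [← h]
    positivity
  · have : min a b = (min a b) ^ (1 - θ) * (min a b) ^ θ := by
      rw [← Real.rpow_add h, sub_add_cancel, Real.rpow_one]
    rw [this]
    exact mul_le_mul (Real.rpow_le_rpow h.le (min_le_left _ _) (by linarith))
      (Real.rpow_le_rpow h.le (min_le_right _ _) h0) (Real.rpow_nonneg h.le _)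
      (Real.rpow_nonneg ha _)

lemma count_sep [MetricSpace X] [MeasurableSpace X] [BorelSpace X]
    (μ : Measure X) {α C₀ : ℝ} (hα : 0 < α) (hC₀ : 0 < C₀)
    (hreg : IsAhlforsRegularWith μ α C₀)
    {ι : Type*} (I : Finset ι) (x : ι → X) {δ' : ℝ} (hδ' : 0 < δ')
    (hδdiam : ENNReal.ofReal (δ' / 2) ≤ EMetric.diam (univ : Set X))
    (hs : ∀ i ∈ I, ∀ j ∈ I, i ≠ j → δ' ≤ dist (x i) (x j))
    (U : Set X) (hU : ∀ i ∈ I, ball (x i) (δ' / 2) ⊆ U) (hUfin : μ U ≠ ∞) :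
    (I.card : ℝ) * ((δ' / 2) ^ α / C₀) ≤ (μ U).toReal := by
  have h2 : 0 < δ' / 2 := by linarith
  have hlow : ∀ i ∈ I, ENNReal.ofReal ((δ' / 2) ^ α / C₀) ≤ μ (ball (x i) (δ' / 2)) :=
    fun i _ => (hreg (x i) (δ' / 2) h2 hδdiam).1
  have hdisj : (I : Set ι).PairwiseDisjoint fun i => ball (x i) (δ' / 2) := by
    intro i hi j hj hij
    exact ball_disjoint_ball (by simpa using (by linarith [hs i hi j hj hij] : δ' / 2 + δ' / 2 ≤ dist (x i) (x j)))
  have hsum : ∑ i ∈ I, μ (ball (x i) (δ' / 2)) ≤ μ U := by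
    rw [← measure_biUnion_finset hdisj fun i _ => measurableSet_ball]
    exact measure_mono (Set.iUnion₂_subset hU)
  have hsum2 : (I.card : ℝ≥0∞) * ENNReal.ofReal ((δ' / 2) ^ α / C₀) ≤ μ U := by
    calc (I.card : ℝ≥0∞) * ENNReal.ofReal ((δ' / 2) ^ α / C₀)
        = ∑ _i ∈ I, ENNReal.ofReal ((δ' / 2) ^ α / C₀) := by simp [Finset.sum_const, nsmul_eq_mul]
      _ ≤ ∑ i ∈ I, μ (ball (x i) (δ' / 2)) := Finset.sum_le_sum hlow
      _ ≤ μ U := hsum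
  have := ENNReal.toReal_mono hUfin hsum2
  rw [ENNReal.toReal_mul, ENNReal.toReal_ofReal (by positivity)] at this
  simpa using this


attribute [local instance] Classical.propDecidable

variable {X : Type*}

structure Sel (X : Type*) (t m : ℕ → ℕ) (Cp : ℕ → ℕ → Set X) where
  A : ℕ → Finset ℕ
  ch : ℕ → ℕ → Finset ℕ
  hA0 : A 0 = {0}
  hAsub : ∀ l, ∀ i ∈ A l, i < t l
  hAbi : ∀ l, A (l + 1) = (A l).biUnion (ch l)
  hchcard : ∀ l, ∀ j ∈ A l, (ch l j).card = m (l + 1)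
  hchsub : ∀ l, ∀ j ∈ A l, ∀ i ∈ ch l j, i < t (l + 1) ∧ Cp (l + 1) i ⊆ Cp l j

variable {t m : ℕ → ℕ} {Cp : ℕ → ℕ → Set X} {δ : ℕ → ℝ}

lemma exists_sel (ht0 : t 0 = 1)
    (hcount : ∀ l, ∀ j < t l,
      m (l + 1) ≤ {i | i < t (l + 1) ∧ Cp (l + 1) i ⊆ Cp l j}.ncard) :
    Nonempty (Sel X t m Cp) := by
  have hch : ∀ l j, ∃ c : Finset ℕ, j < t l →
      c.card = m (l + 1) ∧ ∀ i ∈ c, i < t (l + 1) ∧ Cp (l + 1) i ⊆ Cp l j := by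
    intro l j
    by_cases hj : j < t l
    · have hfin : {i | i < t (l + 1) ∧ Cp (l + 1) i ⊆ Cp l j}.Finite :=
        (Set.finite_Iio (t (l + 1))).subset fun i hi => hi.1
      have hcard := hcount l j hj
      rw [Set.ncard_eq_toFinset_card _ hfin] at hcard
      obtain ⟨c, hc, hcc⟩ := Finset.exists_subset_card_eq hcard
      exact ⟨c, fun _ => ⟨hcc, fun i hi => by simpa using hfin.mem_toFinset.mp (hc hi)⟩⟩
    · exact ⟨∅, fun h => absurd h hj⟩
  choose ch hch using hch
  let A : ℕ → Finset ℕ := fun l => Nat.rec {0} (fun l' Al => Al.biUnion (ch l')) l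
  have hAsub : ∀ l, ∀ i ∈ A l, i < t l := by
    intro l
    induction l with
    | zero =>
      intro i hi
      have hi' : i = 0 := Finset.mem_singleton.mp hi
      rw [hi', ht0]
      exact Nat.zero_lt_one
    | succ l ih =>
      intro i hi
      obtain ⟨j, hj, hij⟩ := Finset.mem_biUnion.mp hi
      exact ((hch l j (ih j hj)).2 i hij).1
  exact ⟨⟨A, ch, rfl, hAsub, fun l => rfl,
    fun l j hj => (hch l j (hAsub l j hj)).1,
    fun l j hj => (hch l j (hAsub l j hj)).2⟩⟩

section

variable [MetricSpace X]

lemma pieces_disj (hδpos : ∀ l, 1 ≤ l → 0 < δ l)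
    (hsep : ∀ l, 1 ≤ l → ∀ i < t l, ∀ j < t l, i ≠ j →
      ∀ x ∈ Cp l i, ∀ y ∈ Cp l j, δ l ≤ dist x y)
    (l : ℕ) (hl : 1 ≤ l) {i j : ℕ} (hi : i < t l) (hj : j < t l) (hij : i ≠ j) :
    Disjoint (Cp l i) (Cp l j) := by
  rw [Set.disjoint_left]
  intro x hxi hxj
  have h1 := hsep l hl i hi j hj hij x hxi x hxj
  have h2 := hδpos l hl
  simp only [dist_self] at h1
  linarith

variable (S : Sel X t m Cp)

lemma Sel.ch_disj (hδpos : ∀ l, 1 ≤ l → 0 < δ l)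
    (hsep : ∀ l, 1 ≤ l → ∀ i < t l, ∀ j < t l, i ≠ j →
      ∀ x ∈ Cp l i, ∀ y ∈ Cp l j, δ l ≤ dist x y)
    (hne : ∀ l, ∀ i < t l, (Cp l i).Nonempty)
    (l : ℕ) {j j' : ℕ} (hj : j ∈ S.A l) (hj' : j' ∈ S.A l) (hjj : j ≠ j') :
    Disjoint (S.ch l j) (S.ch l j') := by
  cases l with
  | zero =>
    rw [S.hA0, Finset.mem_singleton] at hj hj'
    exact absurd (hj.trans hj'.symm) hjj
  | succ l =>
    rw [Finset.disjoint_left]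
    intro i hi hi'
    have h1 := S.hchsub _ j hj i hi
    have h2 := S.hchsub _ j' hj' i hi'
    obtain ⟨x, hx⟩ := hne _ i h1.1
    exact (pieces_disj (δ := δ) hδpos hsep (l + 1) (Nat.succ_le_succ (Nat.zero_le _))
      (S.hAsub _ j hj) (S.hAsub _ j' hj') hjj).ne_of_mem (h1.2 hx) (h2.2 hx) rfl

lemma Sel.card_A (hδpos : ∀ l, 1 ≤ l → 0 < δ l)
    (hsep : ∀ l, 1 ≤ l → ∀ i < t l, ∀ j < t l, i ≠ j →
      ∀ x ∈ Cp l i, ∀ y ∈ Cp l j, δ l ≤ dist x y)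
    (hne : ∀ l, ∀ i < t l, (Cp l i).Nonempty) (l : ℕ) :
    (S.A l).card = ∏ k ∈ Finset.Icc 1 l, m k := by
  induction l with
  | zero => simp [S.hA0]
  | succ l ih =>
    rw [S.hAbi, Finset.card_biUnion
      (fun j hj j' hj' hjj => S.ch_disj hδpos hsep hne l hj hj' hjj),
      Finset.prod_Icc_succ_top (Nat.succ_le_succ (Nat.zero_le _)), ← ih,
      Finset.sum_congr rfl (fun j hj => S.hchcard l j hj), Finset.sum_const, smul_eq_mul]

lemma Sel.ancestor (l k : ℕ) : ∀ i ∈ S.A (l + k), ∃ j ∈ S.A l, Cp (l + k) i ⊆ Cp l j := by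
  induction k with
  | zero => exact fun i hi => ⟨i, hi, subset_rfl⟩
  | succ k ih =>
    intro i hi
    have hi' : i ∈ (S.A (l + k)).biUnion (S.ch (l + k)) := by rw [← S.hAbi]; exact hi
    obtain ⟨p, hp, hip⟩ := Finset.mem_biUnion.mp hi'
    obtain ⟨j, hj, hsub⟩ := ih p hp
    exact ⟨j, hj, (S.hchsub _ p hp i hip).2.trans hsub⟩

lemma Sel.unique_ancestor (hδpos : ∀ l, 1 ≤ l → 0 < δ l)
    (hsep : ∀ l, 1 ≤ l → ∀ i < t l, ∀ j < t l, i ≠ j →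
      ∀ x ∈ Cp l i, ∀ y ∈ Cp l j, δ l ≤ dist x y)
    (hne : ∀ l, ∀ i < t l, (Cp l i).Nonempty)
    {l L : ℕ} (hlL : l ≤ L) {i j j' : ℕ} (hi : i ∈ S.A L) (hj : j ∈ S.A l) (hj' : j' ∈ S.A l)
    (h1 : Cp L i ⊆ Cp l j) (h2 : Cp L i ⊆ Cp l j') : j = j' := by
  by_contra hjj
  cases l with
  | zero =>
    rw [S.hA0, Finset.mem_singleton] at hj hj'
    exact hjj (hj.trans hj'.symm)
  | succ l =>
    obtain ⟨x, hx⟩ := hne L i (S.hAsub L i hi)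
    exact (pieces_disj (δ := δ) hδpos hsep (l + 1) (Nat.succ_le_succ (Nat.zero_le _))
      (S.hAsub _ j hj) (S.hAsub _ j' hj') hjj).ne_of_mem (h1 hx) (h2 hx) rfl

lemma Sel.Scount (hδpos : ∀ l, 1 ≤ l → 0 < δ l)
    (hsep : ∀ l, 1 ≤ l → ∀ i < t l, ∀ j < t l, i ≠ j →
      ∀ x ∈ Cp l i, ∀ y ∈ Cp l j, δ l ≤ dist x y)
    (hne : ∀ l, ∀ i < t l, (Cp l i).Nonempty)
    (l k : ℕ) (j : ℕ) (hj : j ∈ S.A l) :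
    ((S.A (l + k)).filter fun i => Cp (l + k) i ⊆ Cp l j).card
      = ∏ k' ∈ Finset.Icc (l + 1) (l + k), m k' := by
  induction k with
  | zero =>
    show ((S.A l).filter fun i => Cp l i ⊆ Cp l j).card = ∏ k' ∈ Finset.Icc (l + 1) l, m k'
    have : ((S.A l).filter fun i => Cp l i ⊆ Cp l j) = {j} := by
      apply Finset.ext
      intro i
      simp only [Finset.mem_filter, Finset.mem_singleton]
      constructor
      · rintro ⟨hi, hsub⟩
        exact S.unique_ancestor (δ := δ) hδpos hsep hne le_rfl hi hi hj subset_rfl hsub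
      · rintro rfl; exact ⟨hj, subset_rfl⟩
    rw [this, Finset.card_singleton, Finset.Icc_eq_empty (by omega), Finset.prod_empty]
  | succ k ih =>
    show ((S.A ((l + k) + 1)).filter fun i => Cp ((l + k) + 1) i ⊆ Cp l j).card
      = ∏ k' ∈ Finset.Icc (l + 1) ((l + k) + 1), m k'
    have key : ((S.A ((l + k) + 1)).filter fun i => Cp ((l + k) + 1) i ⊆ Cp l j)
        = ((S.A (l + k)).filter fun i => Cp (l + k) i ⊆ Cp l j).biUnion (S.ch (l + k)) := by
      apply Finset.ext
      intro i
      simp only [Finset.mem_filter, Finset.mem_biUnion]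
      constructor
      · rintro ⟨hi, hsub⟩
        have hi' : i ∈ (S.A (l + k)).biUnion (S.ch (l + k)) := by rw [← S.hAbi]; exact hi
        obtain ⟨p, hp, hip⟩ := Finset.mem_biUnion.mp hi'
        obtain ⟨a, ha, hsuba⟩ := S.ancestor l k p hp
        have hsub2 := (S.hchsub _ p hp i hip).2
        have hiA : i ∈ S.A (l + (k + 1)) := hi
        have : a = j := S.unique_ancestor (δ := δ) hδpos hsep hne
          (Nat.le_add_right l (k + 1)) hiA ha hj (hsub2.trans hsuba) hsub
        exact ⟨p, ⟨hp, this ▸ hsuba⟩, hip⟩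
      · rintro ⟨p, ⟨hp, hsubp⟩, hip⟩
        refine ⟨?_, (S.hchsub _ p hp i hip).2.trans hsubp⟩
        rw [S.hAbi]
        exact Finset.mem_biUnion.mpr ⟨p, hp, hip⟩
    rw [key, Finset.card_biUnion (fun p hp p' hp' hpp =>
        S.ch_disj hδpos hsep hne (l + k) (Finset.mem_filter.mp hp).1
          (Finset.mem_filter.mp hp').1 hpp),
      Finset.sum_congr rfl (fun p hp => S.hchcard _ p (Finset.mem_filter.mp hp).1),
      Finset.sum_const, smul_eq_mul, ih,
      Finset.prod_Icc_succ_top (by omega : l + 1 ≤ l + k + 1)]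

end


lemma K_antitone (hnested : ∀ l, (⋃ i ∈ Finset.range (t (l + 1)), Cp (l + 1) i) ⊆
      ⋃ i ∈ Finset.range (t l), Cp l i) {a b : ℕ} (hab : a ≤ b) :
    (⋃ i ∈ Finset.range (t b), Cp b i) ⊆ ⋃ i ∈ Finset.range (t a), Cp a i := by
  induction b, hab using Nat.le_induction with
  | base => exact subset_rfl
  | succ b hab ih => exact (hnested b).trans ih

lemma Sel.chain_exists (S : Sel X t m Cp) (hm : ∀ l, 1 ≤ l → 2 ≤ m l)
    (l i : ℕ) (hi : i ∈ S.A l) :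
    ∃ G : ℕ → ℕ, G 0 = i ∧ (∀ k, G k ∈ S.A (l + k)) ∧
      ∀ k, G (k + 1) ∈ S.ch (l + k) (G k) := by
  have hchne : ∀ k (p : ℕ), p ∈ S.A k → (S.ch k p).Nonempty := by
    intro k p hp
    rw [← Finset.card_pos, S.hchcard k p hp]
    exact lt_of_lt_of_le Nat.zero_lt_two (hm (k + 1) (Nat.succ_le_succ (Nat.zero_le _)))
  let F : ∀ k : ℕ, {p : ℕ // p ∈ S.A (l + k)} := fun k =>
    Nat.rec ⟨i, hi⟩ (fun k' p =>
      ⟨(hchne (l + k') p.1 p.2).choose, by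
        show _ ∈ S.A ((l + k') + 1)
        rw [S.hAbi]
        exact Finset.mem_biUnion.mpr ⟨p.1, p.2, (hchne (l + k') p.1 p.2).choose_spec⟩⟩) k
  exact ⟨fun k => (F k).1, rfl, fun k => (F k).2,
    fun k => (hchne (l + k) (F k).1 (F k).2).choose_spec⟩

lemma Sel.meets_inter (S : Sel X t m Cp) [MetricSpace X]
    (hne : ∀ l, ∀ i < t l, (Cp l i).Nonempty)
    (hcpt : ∀ l, ∀ i < t l, IsCompact (Cp l i))
    (hnested : ∀ l, (⋃ i ∈ Finset.range (t (l + 1)), Cp (l + 1) i) ⊆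
      ⋃ i ∈ Finset.range (t l), Cp l i)
    (hm : ∀ l, 1 ≤ l → 2 ≤ m l)
    (l i : ℕ) (hi : i ∈ S.A l) :
    ∃ x, x ∈ Cp l i ∧ ∀ k, x ∈ ⋃ i' ∈ Finset.range (t k), Cp k i' := by
  obtain ⟨G, hG0, hGA, hGch⟩ := S.chain_exists hm l i hi
  set D : ℕ → Set X := fun k => Cp (l + k) (G k) with hD
  have hDle : ∀ k, D (k + 1) ⊆ D k := fun k =>
    (S.hchsub (l + k) (G k) (hGA k) (G (k + 1)) (hGch k)).2
  have hDne : ∀ k, (D k).Nonempty := fun k => hne _ _ (S.hAsub _ _ (hGA k))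
  have hDcpt : ∀ k, IsCompact (D k) := fun k => hcpt _ _ (S.hAsub _ _ (hGA k))
  obtain ⟨x, hx⟩ := IsCompact.nonempty_iInter_of_sequence_nonempty_isCompact_isClosed
    D hDle hDne (hDcpt 0) (fun k => (hDcpt k).isClosed)
  have hxD : ∀ k, x ∈ D k := by simpa [Set.mem_iInter] using hx
  have hxK : ∀ k, l ≤ k → x ∈ ⋃ i' ∈ Finset.range (t k), Cp k i' := by
    intro k hlk
    have h1 : x ∈ Cp (l + (k - l)) (G (k - l)) := hxD (k - l)
    rw [Nat.add_sub_cancel' hlk] at h1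
    have h2 : G (k - l) < t k := by
      have := S.hAsub _ _ (hGA (k - l))
      rwa [Nat.add_sub_cancel' hlk] at this
    exact Set.mem_biUnion (Finset.mem_range.mpr h2) h1
  have hx0 : x ∈ Cp l i := by
    have h0 : x ∈ Cp (l + 0) (G 0) := hxD 0
    rwa [hG0, Nat.add_zero] at h0
  refine ⟨x, hx0, fun k => ?_⟩
  rcases le_or_gt l k with h | h
  · exact hxK k h
  · exact K_antitone hnested h.le (hxK l le_rfl)

lemma count_V [MetricSpace X] [MeasurableSpace X] [BorelSpace X]
    (μ : Measure X) {α C₀ : ℝ} (hα : 0 < α) (hC₀ : 0 < C₀)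
    (hreg : IsAhlforsRegularWith μ α C₀)
    (hδpos : ∀ l, 1 ≤ l → 0 < δ l)
    (hsep : ∀ l, 1 ≤ l → ∀ i < t l, ∀ j < t l, i ≠ j →
      ∀ x ∈ Cp l i, ∀ y ∈ Cp l j, δ l ≤ dist x y)
    (hne : ∀ l, ∀ i < t l, (Cp l i).Nonempty)
    (hm : ∀ l, 1 ≤ l → 2 ≤ m l)
    (hX1 : ENNReal.ofReal (δ 1) ≤ EMetric.diam (univ : Set X))
    (hδ1 : ∀ l, 1 ≤ l → δ l ≤ δ 1)
    (S : Sel X t m Cp)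
    {s θ : ℝ} (hs0 : 0 < s) (hθ : α * θ = s) (hθ0 : 0 < θ) (hθ1 : θ < 1)
    (l k : ℕ) (hl : 1 ≤ l) (V : Set X) (dn : ℝ) (hdn : 0 < dn)
    (hV : ∀ x ∈ V, ∀ y ∈ V, dist x y ≤ dn)
    (hδl1 : δ (l + 1) ≤ dn) (hδl : dn < δ l) (h2d : 2 * dn ≤ δ 1)
    (hE' : (δ (l + 1) ^ s)⁻¹ ≤ (∏ k' ∈ Finset.Icc 1 l, (m k' : ℝ)) * (m (l + 1) : ℝ) ^ θ) :
    (((S.A (l + 1 + k)).filter fun i => (Cp (l + 1 + k) i ∩ V).Nonempty).card : ℝ)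
      ≤ (C₀ ^ 2 * 4 ^ α) ^ θ * dn ^ s * ∏ k' ∈ Finset.Icc 1 (l + 1 + k), (m k' : ℝ) := by
  set δ' : ℝ := δ (l + 1) with hδ'def
  have hδ'pos : 0 < δ' := hδpos (l + 1) (by omega)
  set K₁ : ℝ := C₀ ^ 2 * 4 ^ α with hK₁def
  have hK₁pos : 0 < K₁ := by positivity
  set N : Finset ℕ := (S.A (l + 1)).filter fun j => (Cp (l + 1) j ∩ V).Nonempty with hNdef
  -- (a) the count at level l+1+k is at most N.card * ∏_{Icc (l+2) (l+1+k)} m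
  have hsubset : ((S.A (l + 1 + k)).filter fun i => (Cp (l + 1 + k) i ∩ V).Nonempty)
      ⊆ N.biUnion fun j => (S.A (l + 1 + k)).filter fun i => Cp (l + 1 + k) i ⊆ Cp (l + 1) j := by
    intro i hi
    obtain ⟨hiA, x, hxC, hxV⟩ := Finset.mem_filter.mp hi
    obtain ⟨j, hjA, hsubj⟩ := S.ancestor (l + 1) k i hiA
    refine Finset.mem_biUnion.mpr ⟨j, Finset.mem_filter.mpr ⟨hjA, ⟨x, hsubj hxC, hxV⟩⟩,
      Finset.mem_filter.mpr ⟨hiA, hsubj⟩⟩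
  have hcount1 : (((S.A (l + 1 + k)).filter fun i => (Cp (l + 1 + k) i ∩ V).Nonempty).card : ℝ)
      ≤ (N.card : ℝ) * ∏ k' ∈ Finset.Icc (l + 2) (l + 1 + k), (m k' : ℝ) := by
    have h1 := Finset.card_le_card hsubset
    have h2 := Finset.card_biUnion_le (s := N)
      (t := fun j => (S.A (l + 1 + k)).filter fun i => Cp (l + 1 + k) i ⊆ Cp (l + 1) j)
    have h3 : ∀ j ∈ N, ((S.A (l + 1 + k)).filter fun i => Cp (l + 1 + k) i ⊆ Cp (l + 1) j).card
        = ∏ k' ∈ Finset.Icc (l + 2) (l + 1 + k), m k' := fun j hj =>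
      S.Scount hδpos hsep hne (l + 1) k j (Finset.mem_filter.mp hj).1
    calc (((S.A (l + 1 + k)).filter fun i => (Cp (l + 1 + k) i ∩ V).Nonempty).card : ℝ)
        ≤ ((N.biUnion fun j => (S.A (l + 1 + k)).filter fun i =>
            Cp (l + 1 + k) i ⊆ Cp (l + 1) j).card : ℝ) := by exact_mod_cast h1
      _ ≤ (∑ j ∈ N, ((S.A (l + 1 + k)).filter fun i =>
            Cp (l + 1 + k) i ⊆ Cp (l + 1) j).card : ℕ) := by exact_mod_cast h2
      _ = (N.card : ℝ) * ∏ k' ∈ Finset.Icc (l + 2) (l + 1 + k), (m k' : ℝ) := by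
          rw [Finset.sum_congr rfl h3, Finset.sum_const, smul_eq_mul]
          push_cast
          ring
  rcases N.eq_empty_or_nonempty with hNe | ⟨j₀, hj₀⟩
  · rw [hNe] at hcount1
    simp only [Finset.card_empty, Nat.cast_zero, zero_mul] at hcount1
    refine hcount1.trans ?_
    have : (0:ℝ) ≤ ∏ k' ∈ Finset.Icc 1 (l + 1 + k), (m k' : ℝ) :=
      Finset.prod_nonneg fun _ _ => Nat.cast_nonneg _
    positivity
  -- pick points
  have hpt : ∀ j ∈ N, ∃ x, x ∈ Cp (l + 1) j ∩ V := fun j hj => (Finset.mem_filter.mp hj).2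
  have hptex : ∀ j : ℕ, ∃ x : X, j ∈ N → x ∈ Cp (l + 1) j ∩ V := by
    intro j
    by_cases hj : j ∈ N
    · exact ⟨(hpt j hj).choose, fun _ => (hpt j hj).choose_spec⟩
    · obtain ⟨x, hx⟩ := hne (l + 1) j₀ (S.hAsub _ _ (Finset.mem_filter.mp hj₀).1)
      exact ⟨x, fun h => absurd h hj⟩
  choose g hg using hptex
  -- (b) N.card ≤ m (l+1)
  have hNm : (N.card : ℝ) ≤ (m (l + 1) : ℝ) := by
    obtain ⟨p₀, hp₀, hjch₀⟩ : ∃ p ∈ S.A l, j₀ ∈ S.ch l p := by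
      have := (Finset.mem_filter.mp hj₀).1
      rw [S.hAbi] at this
      exact Finset.mem_biUnion.mp this
    have hNsub : N ⊆ S.ch l p₀ := by
      intro j hj
      obtain ⟨p, hp, hjch⟩ : ∃ p ∈ S.A l, j ∈ S.ch l p := by
        have := (Finset.mem_filter.mp hj).1
        rw [S.hAbi] at this
        exact Finset.mem_biUnion.mp this
      rcases eq_or_ne p p₀ with rfl | hpp
      · exact hjch
      · exfalso
        have hx := hg j hj
        have hx₀ := hg j₀ hj₀
        have hd1 : dist (g j) (g j₀) ≤ dn := hV _ hx.2 _ hx₀.2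
        have hsep' := hsep l hl p (S.hAsub l p hp) p₀ (S.hAsub l p₀ hp₀) hpp (g j)
          ((S.hchsub l p hp j hjch).2 hx.1) (g j₀) ((S.hchsub l p₀ hp₀ j₀ hjch₀).2 hx₀.1)
        linarith
    calc (N.card : ℝ) ≤ ((S.ch l p₀).card : ℝ) := by exact_mod_cast Finset.card_le_card hNsub
      _ = (m (l + 1) : ℝ) := by rw [S.hchcard l p₀ hp₀]
  -- (c) N.card ≤ K₁ * (dn / δ')^α
  have hNvol : (N.card : ℝ) ≤ K₁ * (dn / δ') ^ α := by
    have hsep2 : ∀ j ∈ N, ∀ j' ∈ N, j ≠ j' → δ' ≤ dist (g j) (g j') := by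
      intro j hj j' hj' hjj
      exact hsep (l + 1) (by omega) j (S.hAsub _ _ (Finset.mem_filter.mp hj).1)
        j' (S.hAsub _ _ (Finset.mem_filter.mp hj').1) hjj (g j) (hg j hj).1 (g j') (hg j' hj').1
    have hδdiam : ENNReal.ofReal (δ' / 2) ≤ EMetric.diam (univ : Set X) :=
      le_trans (ENNReal.ofReal_le_ofReal (by linarith [hδ1 (l + 1) (by omega)])) hX1
    have hU : ∀ j ∈ N, ball (g j) (δ' / 2) ⊆ ball (g j₀) (2 * dn) := by
      intro j hj z hz
      rw [mem_ball] at hz ⊢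
      have h1 : dist (g j) (g j₀) ≤ dn := hV _ (hg j hj).2 _ (hg j₀ hj₀).2
      calc dist z (g j₀) ≤ dist z (g j) + dist (g j) (g j₀) := dist_triangle _ _ _
        _ < δ' / 2 + dn := by linarith
        _ ≤ 2 * dn := by linarith
    have hup := (hreg (g j₀) (2 * dn) (by linarith)
      (le_trans (ENNReal.ofReal_le_ofReal h2d) hX1)).2
    have hUfin : μ (ball (g j₀) (2 * dn)) ≠ ∞ :=
      (lt_of_le_of_lt hup ENNReal.ofReal_lt_top).ne
    have hcs := count_sep μ hα hC₀ hreg N g hδ'pos hδdiam hsep2 _ hU hUfin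
    have hub : (μ (ball (g j₀) (2 * dn))).toReal ≤ C₀ * (2 * dn) ^ α := by
      have := ENNReal.toReal_mono (by simp) hup
      rwa [ENNReal.toReal_ofReal (by positivity)] at this
    have hmain : (N.card : ℝ) * ((δ' / 2) ^ α / C₀) ≤ C₀ * (2 * dn) ^ α := hcs.trans hub
    have hpow : (0:ℝ) < (δ' / 2) ^ α / C₀ := by positivity
    rw [← le_div_iff₀ hpow] at hmain
    refine hmain.trans_eq ?_
    rw [div_div_eq_mul_div]
    have h4 : (4:ℝ) ^ α * (dn / δ') ^ α = (2 * dn) ^ α / (δ' / 2) ^ α := by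
      rw [← Real.mul_rpow (by norm_num) (by positivity),
        ← Real.div_rpow (by positivity) (by positivity)]
      congr 1
      field_simp
      ring
    calc C₀ * (2 * dn) ^ α * C₀ / (δ' / 2) ^ α
        = C₀ ^ 2 * ((2 * dn) ^ α / (δ' / 2) ^ α) := by ring
      _ = C₀ ^ 2 * ((4:ℝ) ^ α * (dn / δ') ^ α) := by rw [h4]
      _ = K₁ * (dn / δ') ^ α := by rw [hK₁def]; ring
  -- (d) interpolation
  have hinterp : (N.card : ℝ) ≤ (m (l + 1) : ℝ) ^ (1 - θ) * (K₁ * (dn / δ') ^ α) ^ θ :=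
    le_trans (le_min hNm hNvol) (min_le_interp (Nat.cast_nonneg _) (by positivity) hθ0.le hθ1.le)
  -- put together
  have hPsplit : (∏ k' ∈ Finset.Icc 1 (l + 1 + k), (m k' : ℝ))
      = ((∏ k' ∈ Finset.Icc 1 l, (m k' : ℝ)) * (m (l + 1) : ℝ))
        * ∏ k' ∈ Finset.Icc (l + 2) (l + 1 + k), (m k' : ℝ) := by
    rw [← Finset.prod_Icc_succ_top (by omega : 1 ≤ l + 1)]
    rw [show Finset.Icc 1 (l+1) = Finset.Ioc 0 (l+1) by rw [← Finset.Icc_add_one_left_eq_Ioc]; rfl,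
        show Finset.Icc (l+2) (l+1+k) = Finset.Ioc (l+1) (l+1+k) by rw [← Finset.Icc_add_one_left_eq_Ioc]; rfl,
        show Finset.Icc 1 (l+1+k) = Finset.Ioc 0 (l+1+k) by rw [← Finset.Icc_add_one_left_eq_Ioc]; rfl]
    rw [← Finset.prod_Ioc_consecutive _ (by omega : 0 ≤ l + 1) (by omega : l + 1 ≤ l + 1 + k)]
  have hDnn : (0:ℝ) ≤ ∏ k' ∈ Finset.Icc (l + 2) (l + 1 + k), (m k' : ℝ) :=
    Finset.prod_nonneg fun _ _ => Nat.cast_nonneg _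
  have hm1 : (2:ℝ) ≤ (m (l + 1) : ℝ) := by exact_mod_cast hm (l + 1) (by omega)
  have hPlpos : (0:ℝ) < ∏ k' ∈ Finset.Icc 1 l, (m k' : ℝ) := by
    apply Finset.prod_pos
    intro k' hk'
    have := hm k' (Finset.mem_Icc.mp hk').1
    exact_mod_cast lt_of_lt_of_le Nat.zero_lt_two this
  -- key: (m(l+1))^(1-θ) * (K₁ (dn/δ')^α)^θ ≤ K₁^θ dn^s (Pr l * m (l+1))
  have hkey : (m (l + 1) : ℝ) ^ (1 - θ) * (K₁ * (dn / δ') ^ α) ^ θ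
      ≤ K₁ ^ θ * dn ^ s * ((∏ k' ∈ Finset.Icc 1 l, (m k' : ℝ)) * (m (l + 1) : ℝ)) := by
    have hrw : (K₁ * (dn / δ') ^ α) ^ θ = K₁ ^ θ * (dn ^ s * (δ' ^ s)⁻¹) := by
      rw [Real.mul_rpow hK₁pos.le (by positivity)]
      congr 1
      rw [← Real.rpow_mul (by positivity) α θ, hθ, Real.div_rpow hdn.le hδ'pos.le,
        div_eq_mul_inv]
    rw [hrw]
    have hδs : (δ' ^ s)⁻¹ ≤ (∏ k' ∈ Finset.Icc 1 l, (m k' : ℝ)) * (m (l + 1) : ℝ) ^ θ := hE'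
    have hmsplit : (m (l + 1) : ℝ) ^ (1 - θ) * (m (l + 1) : ℝ) ^ θ = (m (l + 1) : ℝ) := by
      rw [← Real.rpow_add (by linarith) (1 - θ) θ, sub_add_cancel, Real.rpow_one]
    calc (m (l + 1) : ℝ) ^ (1 - θ) * (K₁ ^ θ * (dn ^ s * (δ' ^ s)⁻¹))
        ≤ (m (l + 1) : ℝ) ^ (1 - θ) * (K₁ ^ θ * (dn ^ s *
            ((∏ k' ∈ Finset.Icc 1 l, (m k' : ℝ)) * (m (l + 1) : ℝ) ^ θ))) := by
          apply mul_le_mul_of_nonneg_left _ (Real.rpow_nonneg (by linarith) _)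
          apply mul_le_mul_of_nonneg_left _ (Real.rpow_nonneg hK₁pos.le _)
          exact mul_le_mul_of_nonneg_left hδs (Real.rpow_nonneg hdn.le _)
      _ = K₁ ^ θ * dn ^ s * ((∏ k' ∈ Finset.Icc 1 l, (m k' : ℝ))
            * ((m (l + 1) : ℝ) ^ (1 - θ) * (m (l + 1) : ℝ) ^ θ)) := by ring
      _ = K₁ ^ θ * dn ^ s * ((∏ k' ∈ Finset.Icc 1 l, (m k' : ℝ)) * (m (l + 1) : ℝ)) := by
          rw [hmsplit]
  calc (((S.A (l + 1 + k)).filter fun i => (Cp (l + 1 + k) i ∩ V).Nonempty).card : ℝ)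
      ≤ (N.card : ℝ) * ∏ k' ∈ Finset.Icc (l + 2) (l + 1 + k), (m k' : ℝ) := hcount1
    _ ≤ ((m (l + 1) : ℝ) ^ (1 - θ) * (K₁ * (dn / δ') ^ α) ^ θ)
          * ∏ k' ∈ Finset.Icc (l + 2) (l + 1 + k), (m k' : ℝ) :=
        mul_le_mul_of_nonneg_right hinterp hDnn
    _ ≤ (K₁ ^ θ * dn ^ s * ((∏ k' ∈ Finset.Icc 1 l, (m k' : ℝ)) * (m (l + 1) : ℝ)))
          * ∏ k' ∈ Finset.Icc (l + 2) (l + 1 + k), (m k' : ℝ) :=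
        mul_le_mul_of_nonneg_right hkey hDnn
    _ = K₁ ^ θ * dn ^ s * ∏ k' ∈ Finset.Icc 1 (l + 1 + k), (m k' : ℝ) := by
        rw [hPsplit]; ring

lemma main_count [MetricSpace X] [MeasurableSpace X] [BorelSpace X]
    (μ : Measure X) {α C₀ : ℝ} (hα : 0 < α) (hC₀ : 0 < C₀)
    (hreg : IsAhlforsRegularWith μ α C₀)
    (hne : ∀ l, ∀ i < t l, (Cp l i).Nonempty)
    (hcpt : ∀ l, ∀ i < t l, IsCompact (Cp l i))
    (hnested : ∀ l, (⋃ i ∈ Finset.range (t (l + 1)), Cp (l + 1) i) ⊆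
      ⋃ i ∈ Finset.range (t l), Cp l i)
    (hm : ∀ l, 1 ≤ l → 2 ≤ m l)
    (hδpos : ∀ l, 1 ≤ l → 0 < δ l)
    (hδanti : ∀ a b : ℕ, 1 ≤ a → a ≤ b → δ b ≤ δ a)
    (hsep : ∀ l, 1 ≤ l → ∀ i < t l, ∀ j < t l, i ≠ j →
      ∀ x ∈ Cp l i, ∀ y ∈ Cp l j, δ l ≤ dist x y)
    (S : Sel X t m Cp)
    (hX1 : ENNReal.ofReal (δ 1) ≤ EMetric.diam (univ : Set X))
    {s θ : ℝ} (hs0 : 0 < s) (hθ : α * θ = s) (hθ0 : 0 < θ) (hθ1 : θ < 1)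
    {l₀ : ℕ} (hl₀ : 1 ≤ l₀)
    (hE' : ∀ l, l₀ ≤ l →
      (δ (l + 1) ^ s)⁻¹ ≤ (∏ k' ∈ Finset.Icc 1 l, (m k' : ℝ)) * (m (l + 1) : ℝ) ^ θ)
    (hδ0 : ∀ ε : ℝ, 0 < ε → ∃ l, 1 ≤ l ∧ δ l ≤ ε)
    (J : Finset ℕ) (V : ℕ → Set X) (d : ℕ → ℝ)
    (hd0 : ∀ n ∈ J, 0 ≤ d n) (hdsmall : ∀ n ∈ J, d n ≤ δ l₀ / 2)
    (hdV : ∀ n ∈ J, ∀ x ∈ V n, ∀ y ∈ V n, dist x y ≤ d n)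
    (hcover : (⋂ l, ⋃ i ∈ Finset.range (t l), Cp l i) ⊆ ⋃ n ∈ J, V n) :
    1 / (2 * (C₀ ^ 2 * 4 ^ α) ^ θ) ≤ ∑ n ∈ J, d n ^ s := by
  set K₁ : ℝ := C₀ ^ 2 * 4 ^ α with hK₁def
  have hK₁pos : 0 < K₁ := by positivity
  have hK₁θpos : 0 < K₁ ^ θ := by positivity
  set Pr : ℕ → ℝ := fun l => ∏ k' ∈ Finset.Icc 1 l, (m k' : ℝ) with hPrdef
  have hPrpos : ∀ l, 0 < Pr l := by
    intro l
    apply Finset.prod_pos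
    intro k' hk'
    have := hm k' (Finset.mem_Icc.mp hk').1
    exact_mod_cast lt_of_lt_of_le Nat.zero_lt_two this
  have hPrpow : ∀ l, (2:ℝ) ^ l ≤ Pr l := by
    intro l
    induction l with
    | zero => simp [hPrdef]
    | succ l ih =>
      have h2 : (2:ℝ) ≤ (m (l + 1) : ℝ) := by exact_mod_cast hm (l + 1) (by omega)
      have : Pr (l + 1) = Pr l * (m (l + 1) : ℝ) := by
        simp only [hPrdef]
        rw [Finset.prod_Icc_succ_top (by omega : 1 ≤ l + 1)]
      rw [this, pow_succ]
      have h2l : (0:ℝ) < 2 ^ l := by positivity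
      exact mul_le_mul ih h2 (by norm_num) (hPrpos l).le
  -- level chooser
  have hlevex : ∀ n : ℕ, ∃ l : ℕ, n ∈ J → 0 < d n →
      l₀ ≤ l ∧ δ (l + 1) ≤ d n ∧ d n < δ l := by
    intro n
    by_cases hn : n ∈ J ∧ 0 < d n
    · obtain ⟨hnJ, hdn⟩ := hn
      have hex : ∃ k : ℕ, δ (k + 1) ≤ d n := by
        obtain ⟨l, hl1, hle⟩ := hδ0 (d n) hdn
        exact ⟨l, (hδanti l (l + 1) hl1 (by omega)).trans hle⟩
      let f := Nat.find hex
      have hfspec : δ (f + 1) ≤ d n := Nat.find_spec hex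
      have hl₀f : l₀ ≤ f := by
        by_contra hcon
        push_neg at hcon
        have h1 : δ l₀ ≤ δ (f + 1) := hδanti (f + 1) l₀ (by omega) (by omega)
        have h2 : d n ≤ δ l₀ / 2 := hdsmall n hnJ
        have h3 := hδpos l₀ hl₀
        have h4 := h1.trans hfspec
        linarith
      have hflt : d n < δ f := by
        have hf1 : 1 ≤ f := le_trans hl₀ hl₀f
        have hmin := Nat.find_min hex (show f - 1 < f by omega)
        push_neg at hmin
        have heq : f - 1 + 1 = f := by omega
        rwa [heq] at hmin
      exact ⟨f, fun _ _ => ⟨hl₀f, hfspec, hflt⟩⟩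
    · exact ⟨l₀, fun hnJ hdn => absurd ⟨hnJ, hdn⟩ hn⟩
  choose lev hlev using hlevex
  set LL : ℕ := max (J.sup lev + 1) (2 * J.card + 1) with hLLdef
  have hLL1 : ∀ n ∈ J, lev n + 1 ≤ LL :=
    fun n hn => le_trans (by have := Finset.le_sup (f := lev) hn; omega) (le_max_left _ _)
  have hLLpos : 1 ≤ LL := le_trans (by omega) (le_max_right _ _)
  have hcardA : ((S.A LL).card : ℝ) = Pr LL := by
    rw [S.card_A hδpos hsep hne LL, hPrdef]
    push_cast
    rfl
  -- total count
  have htotal : S.A LL ⊆ J.biUnion fun n =>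
      (S.A LL).filter fun i => (Cp LL i ∩ V n).Nonempty := by
    intro i hi
    obtain ⟨x, hxCp, hxK⟩ := S.meets_inter hne hcpt hnested hm LL i hi
    have hxF : x ∈ ⋂ l, ⋃ i' ∈ Finset.range (t l), Cp l i' := Set.mem_iInter.mpr hxK
    obtain ⟨n, hn, hxV⟩ := Set.mem_iUnion₂.mp (hcover hxF)
    exact Finset.mem_biUnion.mpr ⟨n, hn, Finset.mem_filter.mpr ⟨hi, ⟨x, hxCp, hxV⟩⟩⟩
  have hsum1 : Pr LL ≤ ∑ n ∈ J,
      (((S.A LL).filter fun i => (Cp LL i ∩ V n).Nonempty).card : ℝ) := by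
    rw [← hcardA]
    calc ((S.A LL).card : ℝ)
        ≤ ((J.biUnion fun n => (S.A LL).filter fun i => (Cp LL i ∩ V n).Nonempty).card : ℝ) := by
          exact_mod_cast Finset.card_le_card htotal
      _ ≤ ∑ n ∈ J, (((S.A LL).filter fun i => (Cp LL i ∩ V n).Nonempty).card : ℝ) := by
          exact_mod_cast Finset.card_biUnion_le
  -- per-n bound
  have hbound : ∀ n ∈ J, (((S.A LL).filter fun i => (Cp LL i ∩ V n).Nonempty).card : ℝ)
      ≤ K₁ ^ θ * d n ^ s * Pr LL + 1 := by
    intro n hn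
    rcases lt_or_eq_of_le (hd0 n hn) with hdn | hdn
    · obtain ⟨hl₀l, hδle, hδgt⟩ := hlev n hn hdn
      have hk : lev n + 1 + (LL - (lev n + 1)) = LL := by
        have := hLL1 n hn
        omega
      have h2d : 2 * d n ≤ δ 1 := by
        have h1 : d n ≤ δ l₀ / 2 := hdsmall n hn
        have h2 : δ l₀ ≤ δ 1 := hδanti 1 l₀ le_rfl hl₀
        linarith
      have hcv := count_V μ hα hC₀ hreg hδpos hsep hne hm hX1
        (fun l hl => hδanti 1 l le_rfl hl) S hs0 hθ hθ0 hθ1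
        (lev n) (LL - (lev n + 1)) (le_trans hl₀ hl₀l) (V n) (d n) hdn
        (hdV n hn) hδle hδgt h2d (hE' (lev n) hl₀l)
      rw [hk] at hcv
      calc (((S.A LL).filter fun i => (Cp LL i ∩ V n).Nonempty).card : ℝ)
          ≤ K₁ ^ θ * d n ^ s * Pr LL := hcv
        _ ≤ K₁ ^ θ * d n ^ s * Pr LL + 1 := by linarith
    · -- d n = 0
      have hcard1 : ((S.A LL).filter fun i => (Cp LL i ∩ V n).Nonempty).card ≤ 1 := by
        rw [Finset.card_le_one]
        intro i hi i' hi'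
        obtain ⟨hiA, x, hxC, hxV⟩ := Finset.mem_filter.mp hi
        obtain ⟨hiA', x', hxC', hxV'⟩ := Finset.mem_filter.mp hi'
        have hdd : dist x x' ≤ 0 := hdn ▸ hdV n hn x hxV x' hxV'
        have hxx : x = x' := by
          rw [← dist_le_zero]
          exact hdd
        by_contra hii
        exact (pieces_disj (Cp := Cp) hδpos hsep LL hLLpos (S.hAsub _ _ hiA)
          (S.hAsub _ _ hiA') hii).ne_of_mem hxC (hxx ▸ hxC') rfl
      have h1 : (0:ℝ) ≤ K₁ ^ θ * d n ^ s * Pr LL := by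
        have := (hPrpos LL).le
        have hds : (0:ℝ) ≤ d n ^ s := Real.rpow_nonneg (hd0 n hn) s
        positivity
      have : (((S.A LL).filter fun i => (Cp LL i ∩ V n).Nonempty).card : ℝ) ≤ 1 := by
        exact_mod_cast hcard1
      linarith
  -- assemble
  have hJcard : (J.card : ℝ) ≤ Pr LL / 2 := by
    have h1 : 2 * J.card < 2 ^ LL := by
      calc 2 * J.card < 2 ^ (2 * J.card) := Nat.lt_two_pow_self
        _ ≤ 2 ^ LL := Nat.pow_le_pow_right (by norm_num) (le_trans (by omega) (le_max_right _ _))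
    have h2 : (2 * J.card : ℝ) ≤ (2:ℝ) ^ LL := by exact_mod_cast h1.le
    have := hPrpow LL
    linarith
  have hsum2 : Pr LL ≤ K₁ ^ θ * (∑ n ∈ J, d n ^ s) * Pr LL + Pr LL / 2 := by
    calc Pr LL ≤ ∑ n ∈ J, (((S.A LL).filter fun i => (Cp LL i ∩ V n).Nonempty).card : ℝ) := hsum1
      _ ≤ ∑ n ∈ J, (K₁ ^ θ * d n ^ s * Pr LL + 1) := Finset.sum_le_sum hbound
      _ = K₁ ^ θ * (∑ n ∈ J, d n ^ s) * Pr LL + J.card := by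
          rw [Finset.sum_add_distrib, Finset.sum_const, nsmul_eq_mul, mul_one]
          rw [← Finset.sum_mul, ← Finset.mul_sum]
      _ ≤ K₁ ^ θ * (∑ n ∈ J, d n ^ s) * Pr LL + Pr LL / 2 := by linarith [hJcard]
  have h5 : Pr LL / 2 ≤ (K₁ ^ θ * ∑ n ∈ J, d n ^ s) * Pr LL := by linarith
  have h6 : (1:ℝ) / 2 ≤ K₁ ^ θ * ∑ n ∈ J, d n ^ s := by
    have h7 := (div_le_iff₀ (hPrpos LL)).mpr h5
    have h8 : Pr LL / 2 / Pr LL = 1 / 2 := by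
      rw [div_div, mul_comm, ← div_div, div_self (hPrpos LL).ne']
    rwa [h8] at h7
  rw [div_le_iff₀ (by positivity)]
  calc (1:ℝ) = 2 * (1 / 2) := by norm_num
    _ ≤ 2 * (K₁ ^ θ * ∑ n ∈ J, d n ^ s) := by linarith
    _ = (∑ n ∈ J, d n ^ s) * (2 * K₁ ^ θ) := by ring

lemma rpow_add_le {x y s : ℝ} (hx : 0 ≤ x) (hy : 0 ≤ y) (hs : 0 < s) :
    (x + y) ^ s ≤ 2 ^ s * (x ^ s + y ^ s) := by
  have h1 : x + y ≤ 2 * max x y := by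
    rcases le_total x y with h | h
    · rw [max_eq_right h]; linarith
    · rw [max_eq_left h]; linarith
  have hmax : (0:ℝ) ≤ max x y := le_max_of_le_left hx
  calc (x + y) ^ s ≤ (2 * max x y) ^ s :=
        Real.rpow_le_rpow (by linarith) h1 hs.le
    _ = 2 ^ s * (max x y) ^ s := Real.mul_rpow (by norm_num) hmax
    _ ≤ 2 ^ s * (x ^ s + y ^ s) := by
        apply mul_le_mul_of_nonneg_left _ (Real.rpow_nonneg (by norm_num) s)
        rcases le_total x y with h | h
        · rw [max_eq_right h]
          have := Real.rpow_nonneg hx s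
          linarith
        · rw [max_eq_left h]
          have := Real.rpow_nonneg hy s
          linarith

-- main glue lemma: given the finite-cover counting bound as a black box hypothesis,
-- conclude the dimension bound.
lemma dimH_lower [MetricSpace X] [ProperSpace X] [MeasurableSpace X] [BorelSpace X]
    (hne : ∀ l, ∀ i < t l, (Cp l i).Nonempty)
    (hcpt : ∀ l, ∀ i < t l, IsCompact (Cp l i))
    {s ε₁ : ℝ} (hs0 : 0 < s) (hε₁ : 0 < ε₁)
    {r₀ ρmax : ℝ} (hr₀ : 0 < r₀) (hρmax : 0 < ρmax)
    (hMC : ∀ (J : Finset ℕ) (V : ℕ → Set X) (d : ℕ → ℝ),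
      (∀ n ∈ J, 0 ≤ d n) → (∀ n ∈ J, d n ≤ r₀ + 2 * ρmax) →
      (∀ n ∈ J, ∀ x ∈ V n, ∀ y ∈ V n, dist x y ≤ d n) →
      ((⋂ l, ⋃ i ∈ Finset.range (t l), Cp l i) ⊆ ⋃ n ∈ J, V n) →
      ε₁ ≤ ∑ n ∈ J, d n ^ s) :
    ENNReal.ofReal s ≤ dimH (⋂ l, ⋃ i ∈ Finset.range (t l), Cp l i) := by
  set F : Set X := ⋂ l, ⋃ i ∈ Finset.range (t l), Cp l i with hFdef
  -- F is compact
  have hKcpt : ∀ l, IsCompact (⋃ i ∈ Finset.range (t l), Cp l i) := by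
    intro l
    apply (Finset.range (t l)).finite_toSet.isCompact_biUnion
    intro i hi
    exact hcpt l i (Finset.mem_range.mp hi)
  have hFcpt : IsCompact F := by
    apply IsCompact.of_isClosed_subset (hKcpt 0)
    · exact isClosed_iInter fun l => (hKcpt l).isClosed
    · exact Set.iInter_subset _ 0
  -- geometric series tail
  set q : ℝ≥0∞ := ENNReal.ofReal ((1/2 : ℝ) ^ s) with hqdef
  have hqlt : q < 1 := by
    rw [hqdef, ← ENNReal.ofReal_one]
    exact ENNReal.ofReal_lt_ofReal_iff_of_nonneg (Real.rpow_nonneg (by norm_num) s) |>.mpr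
      (Real.rpow_lt_one (by norm_num) (by norm_num) hs0)
  have hgeo : ∑' n : ℕ, q ^ n = (1 - q)⁻¹ := ENNReal.tsum_geometric q
  have hgfin : (1 - q)⁻¹ ≠ ∞ := by
    rw [Ne, ENNReal.inv_eq_top, tsub_eq_zero_iff_le]
    exact fun h => absurd h hqlt.not_ge
  -- the target quantity
  set ε₀ : ℝ≥0∞ := ENNReal.ofReal ε₁ / 2 / ENNReal.ofReal (2 ^ s) with hε₀def
  have h2s : ENNReal.ofReal ((2:ℝ) ^ s) ≠ 0 := by
    simp only [Ne, ENNReal.ofReal_eq_zero, not_le]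
    positivity
  have hε₀pos : 0 < ε₀ := by
    rw [hε₀def]
    apply ENNReal.div_pos
    · apply (ENNReal.div_pos (by simp [hε₁]) (by norm_num)).ne'
    · exact ENNReal.ofReal_ne_top
  -- choose ρ₀
  have hW : ∃ η : ℝ, 0 < η ∧ ENNReal.ofReal η * (1 - q)⁻¹ * ENNReal.ofReal (2 ^ s)
      ≤ ENNReal.ofReal ε₁ / 2 := by
    set W : ℝ≥0∞ := ENNReal.ofReal ε₁ / 2 / ENNReal.ofReal (2 ^ s) / (1 - q)⁻¹ with hWdef
    have hWpos : 0 < W := by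
      rw [hWdef]
      apply ENNReal.div_pos hε₀pos.ne' hgfin
    obtain ⟨η, hη0, hηW⟩ : ∃ η : ℝ, 0 < η ∧ ENNReal.ofReal η ≤ W := by
      rcases eq_or_ne W ∞ with hWt | hWt
      · exact ⟨1, one_pos, by simp [hWt]⟩
      · refine ⟨W.toReal, ?_, by rw [ENNReal.ofReal_toReal hWt]⟩
        exact ENNReal.toReal_pos hWpos.ne' hWt
    refine ⟨η, hη0, ?_⟩
    have h1 : ENNReal.ofReal η * (1 - q)⁻¹ * ENNReal.ofReal (2 ^ s)
        ≤ W * (1 - q)⁻¹ * ENNReal.ofReal (2 ^ s) := by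
      gcongr
    refine h1.trans ?_
    rw [hWdef]
    rw [ENNReal.div_mul_cancel (by
        rw [Ne, ENNReal.inv_eq_zero]
        exact (lt_of_le_of_lt tsub_le_self ENNReal.one_lt_top).ne) hgfin]
    rw [ENNReal.div_mul_cancel h2s ENNReal.ofReal_ne_top]
  obtain ⟨η, hη0, hηbound⟩ := hW
  set ρ₀ : ℝ := min (η ^ (1/s) / 2) ρmax with hρ₀def
  have hρ₀pos : 0 < ρ₀ := by
    apply lt_min _ hρmax
    have : 0 < η ^ (1/s) := Real.rpow_pos_of_pos hη0 _
    linarith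
  have hρ₀η : (2 * ρ₀) ^ s ≤ η := by
    have h1 : 2 * ρ₀ ≤ η ^ (1/s) := by
      have := min_le_left (η ^ (1/s) / 2) ρmax
      rw [hρ₀def]
      linarith [min_le_left (η ^ (1/s) / 2) ρmax]
    calc (2 * ρ₀) ^ s ≤ (η ^ (1/s)) ^ s :=
          Real.rpow_le_rpow (by linarith) h1 hs0.le
      _ = η := by
          rw [← Real.rpow_mul hη0.le, one_div, inv_mul_cancel₀ hs0.ne', Real.rpow_one]
  -- the premeasure bound
  have hpre : ∀ (T : ℕ → Set X), F ⊆ ⋃ n, T n →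
      (∀ n, EMetric.diam (T n) ≤ ENNReal.ofReal r₀) →
      ε₀ ≤ ∑' n, ⨆ _ : (T n).Nonempty, EMetric.diam (T n) ^ s := by
    intro T hTcov hTdiam
    -- replace guarded sum by plain sum
    have hguard : ∑' n, (⨆ _ : (T n).Nonempty, EMetric.diam (T n) ^ s)
        = ∑' n, EMetric.diam (T n) ^ s := by
      apply tsum_congr
      intro n
      rcases eq_empty_or_nonempty (T n) with he | hn
      · have hde : EMetric.diam (∅ : Set X) = 0 := Metric.ediam_empty
        simp [he, hde, ENNReal.zero_rpow_of_pos hs0]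
      · simp [hn]
    rw [hguard]
    set ρ : ℕ → ℝ := fun n => ρ₀ * (1/2) ^ n with hρdef
    have hρpos : ∀ n, 0 < ρ n := fun n => by positivity
    have hρle : ∀ n, ρ n ≤ ρ₀ := fun n => by
      rw [hρdef]
      calc ρ₀ * (1/2:ℝ) ^ n ≤ ρ₀ * 1 := by
            apply mul_le_mul_of_nonneg_left _ hρ₀pos.le
            exact pow_le_one₀ (by norm_num) (by norm_num)
        _ = ρ₀ := mul_one _
    set V : ℕ → Set X := fun n => thickening (ρ n) (T n) with hVdef
    set dd : ℕ → ℝ := fun n => (EMetric.diam (T n)).toReal + 2 * ρ n with hddef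
    have hVopen : ∀ n, IsOpen (V n) := fun n => isOpen_thickening
    have hTV : ∀ n, T n ⊆ V n := fun n => self_subset_thickening (hρpos n) _
    -- finite subcover
    obtain ⟨J, hJ⟩ := hFcpt.elim_finite_subcover V hVopen
      (hTcov.trans (Set.iUnion_mono hTV))
    -- diam of V
    have hdfin : ∀ n, EMetric.diam (T n) ≠ ∞ :=
      fun n => ((hTdiam n).trans_lt ENNReal.ofReal_lt_top).ne
    have hVdiam : ∀ n, EMetric.diam (V n) ≤ EMetric.diam (T n) + ENNReal.ofReal (2 * ρ n) := by
      intro n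
      have h1 := Metric.ediam_thickening_le (s := T n) (ρ n).toNNReal
      rw [Real.coe_toNNReal _ (hρpos n).le] at h1
      refine h1.trans ?_
      rw [ENNReal.ofReal_mul (by norm_num)]
      gcongr
      · exact le_rfl
      · rw [ENNReal.ofReal_ofNat]
      · exact le_rfl
    have hdV : ∀ n ∈ J, ∀ x ∈ V n, ∀ y ∈ V n, dist x y ≤ dd n := by
      intro n _ x hx y hy
      have h1 : edist x y ≤ EMetric.diam (T n) + ENNReal.ofReal (2 * ρ n) :=
        (EMetric.edist_le_diam_of_mem hx hy).trans (hVdiam n)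
      have h2 : (EMetric.diam (T n) + ENNReal.ofReal (2 * ρ n)).toReal = dd n := by
        show _ = (EMetric.diam (T n)).toReal + 2 * ρ n
        rw [ENNReal.toReal_add (hdfin n) ENNReal.ofReal_ne_top,
          ENNReal.toReal_ofReal (by positivity)]
      rw [dist_edist, ← h2]
      exact ENNReal.toReal_mono (by
        rw [Ne, ENNReal.add_eq_top]
        push_neg
        exact ⟨hdfin n, ENNReal.ofReal_ne_top⟩) h1
    have hd0 : ∀ n ∈ J, 0 ≤ dd n := fun n _ => by
      show (0:ℝ) ≤ (EMetric.diam (T n)).toReal + 2 * ρ n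
      have h1 := ENNReal.toReal_nonneg (a := EMetric.diam (T n))
      have h2 := (hρpos n).le
      linarith
    have hdsmall : ∀ n ∈ J, dd n ≤ r₀ + 2 * ρmax := by
      intro n _
      show (EMetric.diam (T n)).toReal + 2 * ρ n ≤ r₀ + 2 * ρmax
      have h1 : (EMetric.diam (T n)).toReal ≤ r₀ := by
        have := ENNReal.toReal_mono ENNReal.ofReal_ne_top (hTdiam n)
        rwa [ENNReal.toReal_ofReal hr₀.le] at this
      have h2 : ρ n ≤ ρmax := (hρle n).trans (min_le_right _ _)
      linarith
    have hmc := hMC J V dd hd0 hdsmall hdV hJ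
    -- now lift to ENNReal
    have hlift : ENNReal.ofReal ε₁ ≤ ∑ n ∈ J, ENNReal.ofReal (dd n ^ s) := by
      rw [← ENNReal.ofReal_sum_of_nonneg (fun n hn => Real.rpow_nonneg (hd0 n hn) s)]
      exact ENNReal.ofReal_le_ofReal hmc
    have hterm : ∀ n ∈ J, ENNReal.ofReal (dd n ^ s)
        ≤ ENNReal.ofReal (2 ^ s) * (EMetric.diam (T n) ^ s + ENNReal.ofReal ((2 * ρ n) ^ s)) := by
      intro n hn
      have h1 : dd n ^ s ≤ 2 ^ s * ((EMetric.diam (T n)).toReal ^ s + (2 * ρ n) ^ s) := by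
        show ((EMetric.diam (T n)).toReal + 2 * ρ n) ^ s ≤ _
        exact rpow_add_le ENNReal.toReal_nonneg (by positivity) hs0
      refine (ENNReal.ofReal_le_ofReal h1).trans ?_
      rw [ENNReal.ofReal_mul (by positivity), ENNReal.ofReal_add (by positivity) (by positivity)]
      gcongr
      rw [← ENNReal.ofReal_rpow_of_nonneg ENNReal.toReal_nonneg hs0.le,
        ENNReal.ofReal_toReal (hdfin n)]
    have hsum3 : ENNReal.ofReal ε₁ ≤ ENNReal.ofReal (2 ^ s) *
        ((∑' n, EMetric.diam (T n) ^ s) + ENNReal.ofReal ((2 * ρ₀) ^ s) * (1 - q)⁻¹) := by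
      refine hlift.trans ?_
      calc ∑ n ∈ J, ENNReal.ofReal (dd n ^ s)
          ≤ ∑ n ∈ J, ENNReal.ofReal (2 ^ s) *
              (EMetric.diam (T n) ^ s + ENNReal.ofReal ((2 * ρ n) ^ s)) :=
            Finset.sum_le_sum hterm
        _ = ENNReal.ofReal (2 ^ s) * ∑ n ∈ J,
              (EMetric.diam (T n) ^ s + ENNReal.ofReal ((2 * ρ n) ^ s)) := by
            rw [Finset.mul_sum]
        _ ≤ ENNReal.ofReal (2 ^ s) *
              ((∑' n, EMetric.diam (T n) ^ s) + ENNReal.ofReal ((2 * ρ₀) ^ s) * (1 - q)⁻¹) := by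
            gcongr
            rw [Finset.sum_add_distrib]
            gcongr
            · exact ENNReal.sum_le_tsum J
            · -- geometric bound
              have hterm2 : ∀ n : ℕ, ENNReal.ofReal ((2 * ρ n) ^ s)
                  = ENNReal.ofReal ((2 * ρ₀) ^ s) * q ^ n := by
                intro n
                have h1 : (2 * ρ n) ^ s = (2 * ρ₀) ^ s * ((1/2 : ℝ) ^ s) ^ n := by
                  rw [hρdef]
                  have h2 : 2 * (ρ₀ * (1/2:ℝ) ^ n) = (2 * ρ₀) * (1/2) ^ n := by ring
                  rw [h2, Real.mul_rpow (by positivity) (by positivity)]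
                  congr 1
                  rw [← Real.rpow_natCast ((1:ℝ)/2) n, ← Real.rpow_mul (by norm_num),
                    mul_comm (n:ℝ) s, Real.rpow_mul (by norm_num), Real.rpow_natCast]
                rw [h1, ENNReal.ofReal_mul (by positivity), hqdef, ← ENNReal.ofReal_pow
                  (by positivity)]
              calc ∑ n ∈ J, ENNReal.ofReal ((2 * ρ n) ^ s)
                  ≤ ∑' n, ENNReal.ofReal ((2 * ρ n) ^ s) := ENNReal.sum_le_tsum J
                _ = ∑' n, ENNReal.ofReal ((2 * ρ₀) ^ s) * q ^ n := by
                    exact tsum_congr hterm2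
                _ = ENNReal.ofReal ((2 * ρ₀) ^ s) * (1 - q)⁻¹ := by
                    rw [ENNReal.tsum_mul_left, hgeo]
    -- conclude
    have htail : ENNReal.ofReal (2 ^ s) * (ENNReal.ofReal ((2 * ρ₀) ^ s) * (1 - q)⁻¹)
        ≤ ENNReal.ofReal ε₁ / 2 := by
      have h1 : ENNReal.ofReal ((2 * ρ₀) ^ s) ≤ ENNReal.ofReal η :=
        ENNReal.ofReal_le_ofReal hρ₀η
      calc ENNReal.ofReal (2 ^ s) * (ENNReal.ofReal ((2 * ρ₀) ^ s) * (1 - q)⁻¹)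
          ≤ ENNReal.ofReal (2 ^ s) * (ENNReal.ofReal η * (1 - q)⁻¹) := by gcongr
        _ = ENNReal.ofReal η * (1 - q)⁻¹ * ENNReal.ofReal (2 ^ s) := by ring
        _ ≤ ENNReal.ofReal ε₁ / 2 := hηbound
    have hfin2 : ENNReal.ofReal ε₁ ≤ ENNReal.ofReal (2 ^ s) * (∑' n, EMetric.diam (T n) ^ s)
        + ENNReal.ofReal ε₁ / 2 := by
      refine hsum3.trans ?_
      rw [mul_add]
      gcongr
    -- a ≤ b + a/2 with a ≠ ∞ gives a/2 ≤ b
    have hhalf : ENNReal.ofReal ε₁ / 2 ≤ ENNReal.ofReal (2 ^ s) *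
        (∑' n, EMetric.diam (T n) ^ s) := by
      have h3 := tsub_le_iff_right.mpr hfin2
      rwa [ENNReal.sub_half ENNReal.ofReal_ne_top] at h3
    rw [hε₀def, ENNReal.div_le_iff h2s ENNReal.ofReal_ne_top]
    calc ENNReal.ofReal ε₁ / 2
        ≤ ENNReal.ofReal (2 ^ s) * (∑' n, EMetric.diam (T n) ^ s) := hhalf
      _ = (∑' n, EMetric.diam (T n) ^ s) * ENNReal.ofReal (2 ^ s) := mul_comm _ _
  -- from hpre to Hausdorff measure bound
  have hμH : ε₀ ≤ μH[s] F := by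
    rw [Measure.hausdorffMeasure_apply]
    refine le_trans ?_ (le_iSup₂ (α := ℝ≥0∞) (ENNReal.ofReal r₀) (by simpa using hr₀))
    exact le_iInf fun T => le_iInf fun hcov => le_iInf fun hdiam => hpre T hcov hdiam
  have hne0 : μH[s] F ≠ 0 := fun h => absurd (h ▸ hμH) hε₀pos.not_ge
  have := le_dimH_of_hausdorffMeasure_ne_zero (d := s.toNNReal) (s := F) (by
    rwa [Real.coe_toNNReal s hs0.le])
  rwa [show ((s.toNNReal : ℝ≥0∞)) = ENNReal.ofReal s from rfl] at this

end CDLB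

attribute [local instance] Classical.propDecidable

set_option maxHeartbeats 1000000

/-- Mass-distribution lower bound for Cantor-like intersections:
`K l = ⋃_{i < t l} C l i` is a nested decreasing sequence of finite disjoint
unions of nonempty compact sets (`K 0` a single nonempty compact set), each
piece of `K l` contains at least `m (l+1) ≥ 2` pieces of `K (l+1)`, the maximal
diameter of the pieces of `K l` tends to `0`, and distinct pieces of `K l` are
`δ l`-separated with `0 < δ (l+1) < δ l`.  Then
`dim ⋂ K l ≥ α · liminf log(m 1 ⋯ m (l−1)) / (− log (m l · (δ l)^α))`. -/
theorem cantor_dimension_lower_bound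
    [MetricSpace X] [ProperSpace X] [MeasurableSpace X] [BorelSpace X]
    (μ : Measure X) (α C₀ : ℝ) (hα : 0 < α) (hC₀ : 0 < C₀)
    (hreg : IsAhlforsRegularWith μ α C₀)
    (t m : ℕ → ℕ) (Cp : ℕ → ℕ → Set X) (δ : ℕ → ℝ)
    (ht0 : t 0 = 1)
    (hne : ∀ l, ∀ i < t l, (Cp l i).Nonempty)
    (hcpt : ∀ l, ∀ i < t l, IsCompact (Cp l i))
    (hnested : ∀ l, (⋃ i ∈ Finset.range (t (l + 1)), Cp (l + 1) i) ⊆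
      ⋃ i ∈ Finset.range (t l), Cp l i)
    (hm : ∀ l, 1 ≤ l → 2 ≤ m l)
    (hcount : ∀ l, ∀ j < t l,
      m (l + 1) ≤ {i | i < t (l + 1) ∧ Cp (l + 1) i ⊆ Cp l j}.ncard)
    (hdiam : ∀ ε : ℝ, 0 < ε → ∃ L : ℕ, ∀ l, L ≤ l → ∀ i < t l,
      EMetric.diam (Cp l i) ≤ ENNReal.ofReal ε)
    (hδpos : ∀ l, 1 ≤ l → 0 < δ l)
    (hδdec : ∀ l, 1 ≤ l → δ (l + 1) < δ l)
    (hsep : ∀ l, 1 ≤ l → ∀ i < t l, ∀ j < t l, i ≠ j →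
      ∀ x ∈ Cp l i, ∀ y ∈ Cp l j, δ l ≤ dist x y) :
    ENNReal.ofReal α *
        liminf (fun l : ℕ => ENNReal.ofReal
          (Real.log (∏ k ∈ Finset.Icc 1 (l - 1), (m k : ℝ)) /
            (- Real.log ((m l : ℝ) * δ l ^ α)))) atTop ≤
      dimH (⋂ l : ℕ, ⋃ i ∈ Finset.range (t l), Cp l i) := by
  classical
  obtain ⟨S⟩ := CDLB.exists_sel ht0 hcount
  set u : ℕ → ℝ≥0∞ := fun l : ℕ => ENNReal.ofReal
      (Real.log (∏ k ∈ Finset.Icc 1 (l - 1), (m k : ℝ)) /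
        (- Real.log ((m l : ℝ) * δ l ^ α))) with hudef
  set β : ℝ≥0∞ := liminf u atTop with hβdef
  set Pr : ℕ → ℝ := fun l => ∏ k ∈ Finset.Icc 1 l, (m k : ℝ) with hPrdef
  have hPrpos : ∀ l, 0 < Pr l := by
    intro l
    apply Finset.prod_pos
    intro k' hk'
    have := hm k' (Finset.mem_Icc.mp hk').1
    exact_mod_cast lt_of_lt_of_le Nat.zero_lt_two this
  have hPrsucc : ∀ l, Pr (l + 1) = Pr l * (m (l + 1) : ℝ) := by
    intro l
    simp only [hPrdef]
    rw [Finset.prod_Icc_succ_top (by omega : 1 ≤ l + 1)]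
  have hPrpow : ∀ l, (2:ℝ) ^ l ≤ Pr l := by
    intro l
    induction l with
    | zero => simp [hPrdef]
    | succ l ih =>
      have h2 : (2:ℝ) ≤ (m (l + 1) : ℝ) := by exact_mod_cast hm (l + 1) (by omega)
      rw [hPrsucc l, pow_succ]
      exact mul_le_mul ih h2 (by norm_num) (hPrpos l).le
  have hδanti : ∀ a b : ℕ, 1 ≤ a → a ≤ b → δ b ≤ δ a := by
    intro a b ha hab
    induction b, hab using Nat.le_induction with
    | base => exact le_rfl
    | succ b hab ih => exact ((hδdec b (le_trans ha hab)).le).trans ih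
  have hδ1pos : 0 < δ 1 := hδpos 1 le_rfl
  -- two separated points give diam lower bound
  have hX1 : ENNReal.ofReal (δ 1) ≤ EMetric.diam (univ : Set X) := by
    have hc := S.card_A hδpos hsep hne 1
    rw [Finset.Icc_self, Finset.prod_singleton] at hc
    have h1 : 1 < (S.A 1).card := by rw [hc]; exact lt_of_lt_of_le one_lt_two (hm 1 le_rfl)
    obtain ⟨i1, hi1, j1, hj1, hij1⟩ := Finset.one_lt_card.mp h1
    obtain ⟨x1, hx1⟩ := hne 1 i1 (S.hAsub 1 i1 hi1)
    obtain ⟨y1, hy1⟩ := hne 1 j1 (S.hAsub 1 j1 hj1)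
    have hdist1 : δ 1 ≤ dist x1 y1 := hsep 1 le_rfl i1 (S.hAsub 1 i1 hi1) j1
      (S.hAsub 1 j1 hj1) hij1 x1 hx1 y1 hy1
    calc ENNReal.ofReal (δ 1) ≤ ENNReal.ofReal (dist x1 y1) := ENNReal.ofReal_le_ofReal hdist1
      _ = edist x1 y1 := (edist_dist x1 y1).symm
      _ ≤ _ := EMetric.edist_le_diam_of_mem (mem_univ _) (mem_univ _)
  -- local finiteness
  haveI hloc : IsLocallyFiniteMeasure μ := ⟨fun x => ⟨ball x (δ 1), ball_mem_nhds x hδ1pos,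
    lt_of_le_of_lt (hreg x (δ 1) hδ1pos hX1).2 ENNReal.ofReal_lt_top⟩⟩
  have ht00 : 0 < t 0 := by omega
  set U₀ : Set X := cthickening (δ 1) (Cp 0 0) with hU₀def
  have hU₀fin : μ U₀ ≠ ∞ := ((hcpt 0 0 ht00).cthickening).measure_lt_top.ne
  set M : ℝ := (μ U₀).toReal with hMdef
  have hM0 : 0 ≤ M := ENNReal.toReal_nonneg
  have hK0 : ∀ l, ∀ i < t l, Cp l i ⊆ Cp 0 0 := by
    intro l i hi
    have h1 : Cp l i ⊆ ⋃ i' ∈ Finset.range (t l), Cp l i' :=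
      Set.subset_biUnion_of_mem (Finset.mem_range.mpr hi)
    refine h1.trans ((CDLB.K_antitone hnested (Nat.zero_le l)).trans ?_)
    intro x hx
    have hx' : x ∈ ⋃ i' ∈ Finset.range (t 0), Cp 0 i' := hx
    rw [ht0] at hx'
    simpa using hx'
  -- volume bound on each level
  have hPrM : ∀ l, 1 ≤ l → Pr l * ((δ l / 2) ^ α / C₀) ≤ M := by
    intro l hl
    have hδl := hδpos l hl
    have hgex : ∀ i : ℕ, ∃ x : X, i ∈ S.A l → x ∈ Cp l i := by
      intro i
      by_cases hi : i ∈ S.A l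
      · exact ⟨(hne l i (S.hAsub l i hi)).choose, fun _ => (hne l i (S.hAsub l i hi)).choose_spec⟩
      · exact ⟨(hne 0 0 ht00).choose, fun h => absurd h hi⟩
    choose g hg using hgex
    have hδl1 : δ l ≤ δ 1 := hδanti 1 l le_rfl hl
    have hδdiam : ENNReal.ofReal (δ l / 2) ≤ EMetric.diam (univ : Set X) :=
      le_trans (ENNReal.ofReal_le_ofReal (by linarith)) hX1
    have hsep' : ∀ i ∈ S.A l, ∀ j ∈ S.A l, i ≠ j → δ l ≤ dist (g i) (g j) := by
      intro i hi j hj hij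
      exact hsep l hl i (S.hAsub l i hi) j (S.hAsub l j hj) hij (g i) (hg i hi) (g j) (hg j hj)
    have hU : ∀ i ∈ S.A l, ball (g i) (δ l / 2) ⊆ U₀ := by
      intro i hi z hz
      rw [mem_ball] at hz
      exact mem_cthickening_of_dist_le z (g i) (δ 1) (Cp 0 0)
        (hK0 l i (S.hAsub l i hi) (hg i hi)) (by linarith)
    have hcs := CDLB.count_sep μ hα hC₀ hreg (S.A l) g hδl hδdiam hsep' U₀ hU hU₀fin
    rwa [S.card_A hδpos hsep hne l, Nat.cast_prod] at hcs
  -- bound on m l * δ l ^ α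
  set c₁ : ℝ := max (M * C₀ * 2 ^ α) 1 with hc₁def
  have hc₁1 : (1:ℝ) ≤ c₁ := le_max_right _ _
  have hqbound : ∀ l, 1 ≤ l → (m l : ℝ) * δ l ^ α ≤ c₁ / Pr (l - 1) := by
    intro l hl
    obtain ⟨l', rfl⟩ : ∃ l', l = l' + 1 := ⟨l - 1, by omega⟩
    have hδl := hδpos (l' + 1) hl
    have h1 := hPrM (l' + 1) hl
    have hhalf : (δ (l' + 1) / 2) ^ α = δ (l' + 1) ^ α / 2 ^ α :=
      Real.div_rpow hδl.le (by norm_num : (0:ℝ) ≤ 2) α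
    rw [hhalf] at h1
    have h2 : Pr (l' + 1) * δ (l' + 1) ^ α ≤ M * C₀ * 2 ^ α := by
      have h2α : (0:ℝ) < 2 ^ α := Real.rpow_pos_of_pos (by norm_num) α
      have hx : δ (l' + 1) ^ α / 2 ^ α / C₀ * (2 ^ α * C₀) = δ (l' + 1) ^ α := by
        field_simp
      have h3 := mul_le_mul_of_nonneg_right h1
        (le_of_lt (by positivity : (0:ℝ) < 2 ^ α * C₀))
      rw [mul_assoc, hx] at h3
      calc Pr (l' + 1) * δ (l' + 1) ^ α ≤ M * (2 ^ α * C₀) := h3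
        _ = M * C₀ * 2 ^ α := by ring
    rw [hPrsucc l'] at h2
    rw [Nat.add_sub_cancel]
    rw [le_div_iff₀ (hPrpos l')]
    calc (m (l' + 1) : ℝ) * δ (l' + 1) ^ α * Pr l'
        = Pr l' * (m (l' + 1) : ℝ) * δ (l' + 1) ^ α := by ring
      _ ≤ M * C₀ * 2 ^ α := h2
      _ ≤ c₁ := le_max_left _ _
  -- δ tends to 0
  have hδ0 : ∀ ε : ℝ, 0 < ε → ∃ l, 1 ≤ l ∧ δ l ≤ ε := by
    intro ε hε
    by_contra hcon
    push_neg at hcon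
    have hb : ∀ l : ℕ, 1 ≤ l → (2:ℝ) ^ l * ((ε / 2) ^ α / C₀) ≤ M := by
      intro l hl
      have h1 : (ε / 2) ^ α ≤ (δ l / 2) ^ α :=
        Real.rpow_le_rpow (by linarith) (by linarith [hcon l hl]) hα.le
      calc (2:ℝ) ^ l * ((ε / 2) ^ α / C₀)
          ≤ Pr l * ((δ l / 2) ^ α / C₀) := by
            apply mul_le_mul (hPrpow l) _ (by positivity) (hPrpos l).le
            exact div_le_div_of_nonneg_right h1 hC₀.le
        _ ≤ M := hPrM l hl
    have hcpos : (0:ℝ) < (ε / 2) ^ α / C₀ := by positivity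
    obtain ⟨n, hn⟩ := pow_unbounded_of_one_lt (M / ((ε / 2) ^ α / C₀)) (one_lt_two (α := ℝ))
    have h2 : M < 2 ^ n * ((ε / 2) ^ α / C₀) := by
      rwa [div_lt_iff₀ hcpos] at hn
    have h3 : (2:ℝ) ^ n ≤ 2 ^ (n + 1) :=
      pow_le_pow_right₀ (by norm_num) (by omega)
    have h4 := hb (n + 1) (by omega)
    nlinarith
  -- β ≤ 1
  have hβ1 : β ≤ 1 := by
    by_contra hβgt
    push_neg at hβgt
    obtain ⟨r, hr0, hr1, hrβ⟩ := ENNReal.lt_iff_exists_real_btwn.mp hβgt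
    have hr1' : (1:ℝ) < r := by
      rw [← ENNReal.ofReal_one] at hr1
      exact (ENNReal.ofReal_lt_ofReal_iff_of_nonneg (by norm_num)).mp hr1
    set b := Real.log c₁ with hbdef
    have hb0 : 0 ≤ b := Real.log_nonneg hc₁1
    have hlog2 : (0:ℝ) < Real.log 2 := Real.log_pos (by norm_num)
    obtain ⟨Nb, hNb⟩ := exists_nat_ge ((r * b / (r - 1) + b + 1) / Real.log 2)
    have hev : ∀ᶠ l : ℕ in atTop, u l ≤ ENNReal.ofReal r := by
      refine eventually_atTop.mpr ⟨Nb + 3, fun l hl => ?_⟩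
      have hl2 : 2 ≤ l := by omega
      have hl1 : 1 ≤ l - 1 := by omega
      set x := Real.log (Pr (l - 1)) with hxdef
      have hx_lb : ((l - 1 : ℕ) : ℝ) * Real.log 2 ≤ x := by
        rw [hxdef, ← Real.log_pow]
        exact Real.log_le_log (by positivity) (hPrpow (l - 1))
      have hxbig : r * b / (r - 1) + b + 1 ≤ x := by
        have h1 : (Nb : ℝ) ≤ ((l - 1 : ℕ) : ℝ) := by
          have : Nb ≤ l - 1 := by omega
          exact_mod_cast this
        have h2 : r * b / (r - 1) + b + 1 ≤ (Nb : ℝ) * Real.log 2 := by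
          rw [div_le_iff₀ hlog2] at hNb
          exact hNb
        calc r * b / (r - 1) + b + 1 ≤ (Nb : ℝ) * Real.log 2 := h2
          _ ≤ ((l - 1 : ℕ) : ℝ) * Real.log 2 := by
              exact mul_le_mul_of_nonneg_right h1 hlog2.le
          _ ≤ x := hx_lb
      have hδl := hδpos l (by omega)
      have hml : (2:ℝ) ≤ (m l : ℝ) := by exact_mod_cast hm l (by omega)
      have hqpos : 0 < (m l : ℝ) * δ l ^ α :=
        mul_pos (by linarith) (Real.rpow_pos_of_pos hδl α)
      have hlogq : Real.log ((m l : ℝ) * δ l ^ α) ≤ b - x := by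
        have h1 := hqbound l (by omega)
        have h2 : Real.log ((m l : ℝ) * δ l ^ α) ≤ Real.log (c₁ / Pr (l - 1)) :=
          Real.log_le_log hqpos h1
        rwa [Real.log_div (by linarith) (hPrpos (l - 1)).ne'] at h2
      have hxb : 0 < x - b := by
        have h0 : 0 ≤ r * b / (r - 1) :=
          div_nonneg (mul_nonneg (by linarith) hb0) (by linarith)
        linarith
      have hx0 : 0 ≤ x := by linarith
      have hD : x - b ≤ - Real.log ((m l : ℝ) * δ l ^ α) := by linarith
      simp only [hudef]
      apply ENNReal.ofReal_le_ofReal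
      show Real.log (∏ k ∈ Finset.Icc 1 (l - 1), (m k : ℝ))
          / (- Real.log ((m l : ℝ) * δ l ^ α)) ≤ r
      have hnum : Real.log (∏ k ∈ Finset.Icc 1 (l - 1), (m k : ℝ)) = x := rfl
      rw [hnum]
      calc x / (- Real.log ((m l : ℝ) * δ l ^ α)) ≤ x / (x - b) :=
            div_le_div_of_nonneg_left hx0 hxb hD
        _ ≤ r := by
            rw [div_le_iff₀ hxb]
            have hr1'' : (0:ℝ) < r - 1 := by linarith
            have hdiv : r * b / (r - 1) * (r - 1) = r * b :=
              div_mul_cancel₀ _ (by linarith)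
            nlinarith [hdiv, hxbig, hb0, hr1'']
    exact absurd (liminf_le_of_frequently_le' hev.frequently) hrβ.not_ge
  -- main conclusion
  rcases eq_or_ne β 0 with hβ0 | hβ0
  · rw [hβ0, mul_zero]
    exact zero_le
  have hβfin : β ≠ ∞ := (lt_of_le_of_lt hβ1 ENNReal.one_lt_top).ne
  set B : ℝ := β.toReal with hBdef
  have hB0 : 0 < B := ENNReal.toReal_pos hβ0 hβfin
  have hB1 : B ≤ 1 := by
    have := ENNReal.toReal_mono ENNReal.one_ne_top hβ1
    simpa using this
  have hLHS : ENNReal.ofReal α * β = ENNReal.ofReal (α * B) := by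
    rw [ENNReal.ofReal_mul hα.le, ENNReal.ofReal_toReal hβfin]
  rw [hLHS]
  apply le_of_forall_lt
  intro c hc
  have hcne : c ≠ ∞ := (hc.trans ENNReal.ofReal_lt_top).ne
  have hcαB : c.toReal < α * B := by
    rw [← ENNReal.lt_ofReal_iff_toReal_lt hcne]
    exact hc
  set s : ℝ := (c.toReal + α * B) / 2 with hsdef
  have hct0 : 0 ≤ c.toReal := ENNReal.toReal_nonneg
  have hαB : 0 < α * B := mul_pos hα hB0
  have hs0 : 0 < s := by rw [hsdef]; linarith
  have hsαB : s < α * B := by rw [hsdef]; linarith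
  have hcs : c < ENNReal.ofReal s := by
    rw [ENNReal.lt_ofReal_iff_toReal_lt hcne, hsdef]
    linarith
  refine lt_of_lt_of_le hcs ?_
  -- now show ofReal s ≤ dimH F
  set θ : ℝ := s / α with hθdef
  have hθ0 : 0 < θ := div_pos hs0 hα
  have hθB : θ < B := by
    rw [hθdef, div_lt_iff₀ hα]
    calc s < α * B := hsαB
      _ = B * α := mul_comm _ _
  have hθ1 : θ < 1 := lt_of_lt_of_le hθB hB1
  have hαθ : α * θ = s := by
    rw [hθdef]
    field_simp
  have hθβ : ENNReal.ofReal θ < β := by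
    calc ENNReal.ofReal θ < ENNReal.ofReal B :=
          (ENNReal.ofReal_lt_ofReal_iff hB0).mpr hθB
      _ = β := ENNReal.ofReal_toReal hβfin
  have hev2 : ∀ᶠ l : ℕ in atTop, ENNReal.ofReal θ < u l :=
    eventually_lt_of_lt_liminf hθβ
  obtain ⟨L, hL⟩ := eventually_atTop.mp hev2
  set l₀ : ℕ := max L 1 with hl₀def
  have hl₀1 : 1 ≤ l₀ := le_max_right _ _
  have hE' : ∀ l, l₀ ≤ l →
      (δ (l + 1) ^ s)⁻¹ ≤ (∏ k' ∈ Finset.Icc 1 l, (m k' : ℝ)) * (m (l + 1) : ℝ) ^ θ := by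
    intro l hl
    have hul := hL (l + 1) (by
      have : L ≤ l₀ := le_max_left _ _
      omega)
    simp only [hudef] at hul
    rw [Nat.add_sub_cancel] at hul
    have hratio : θ < Real.log (Pr l) / (- Real.log ((m (l + 1) : ℝ) * δ (l + 1) ^ α)) :=
      (ENNReal.ofReal_lt_ofReal_iff_of_nonneg hθ0.le).mp hul
    have hml : (2:ℝ) ≤ (m (l + 1) : ℝ) := by exact_mod_cast hm (l + 1) (by omega)
    have hδ' : 0 < δ (l + 1) := hδpos _ (by omega)
    have hqpos : 0 < (m (l + 1) : ℝ) * δ (l + 1) ^ α :=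
      mul_pos (by linarith) (Real.rpow_pos_of_pos hδ' α)
    have hlogPr : 0 ≤ Real.log (Pr l) := by
      apply Real.log_nonneg
      calc (1:ℝ) ≤ 2 ^ l := one_le_pow₀ (by norm_num)
        _ ≤ Pr l := hPrpow l
    have hDpos : 0 < - Real.log ((m (l + 1) : ℝ) * δ (l + 1) ^ α) := by
      by_contra hD
      push_neg at hD
      have h1 : Real.log (Pr l) / (- Real.log ((m (l + 1) : ℝ) * δ (l + 1) ^ α)) ≤ 0 :=
        div_nonpos_iff.mpr (Or.inl ⟨hlogPr, hD⟩)
      linarith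
    have hθD := (lt_div_iff₀ hDpos).mp hratio
    have hmpos : (0:ℝ) < (m (l + 1) : ℝ) := by linarith
    have hgoal : Real.log ((δ (l + 1) ^ s)⁻¹)
        ≤ Real.log (Pr l * (m (l + 1) : ℝ) ^ θ) := by
      rw [Real.log_inv, Real.log_rpow hδ',
        Real.log_mul (hPrpos l).ne' (Real.rpow_pos_of_pos hmpos θ).ne',
        Real.log_rpow hmpos]
      have hlogq : Real.log ((m (l + 1) : ℝ) * δ (l + 1) ^ α)
          = Real.log (m (l + 1) : ℝ) + α * Real.log (δ (l + 1)) := by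
        rw [Real.log_mul hmpos.ne' (Real.rpow_pos_of_pos hδ' α).ne', Real.log_rpow hδ']
      rw [hlogq] at hθD
      have hs' : s * Real.log (δ (l + 1)) = θ * (α * Real.log (δ (l + 1))) := by
        rw [← hαθ]
        ring
      nlinarith [hθD, hs']
    have h2 := (Real.log_le_log_iff
      (inv_pos.mpr (Real.rpow_pos_of_pos hδ' s))
      (mul_pos (hPrpos l) (Real.rpow_pos_of_pos hmpos θ))).mp hgoal
    exact h2
  -- finish via CDLB.dimH_lower and main_count
  have hδl₀pos := hδpos l₀ hl₀1
  refine CDLB.dimH_lower hne hcpt hs0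
    (by positivity : (0:ℝ) < 1 / (2 * (C₀ ^ 2 * 4 ^ α) ^ θ))
    (show (0:ℝ) < δ l₀ / 4 by linarith)
    (show (0:ℝ) < δ l₀ / 16 by linarith) ?_
  intro J V d h1 h2 h3 h4
  exact CDLB.main_count μ hα hC₀ hreg hne hcpt hnested hm hδpos hδanti hsep S hX1 hs0 hαθ hθ0 hθ1
    hl₀1 hE' hδ0 J V d h1 (fun n hn => le_trans (h2 n hn) (by linarith)) h3 h4

end
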